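/- In the horizontal strip S: let I = (a,b) ⊂ ℝ be a bounded interval on the lower boundary line and let J = {x ∈ ℝ : x > c} ∪ {x + i : x > d} with b < c. Then mod Γᵋ_{I,J} is bounded as ε → 0⁺, i.e. there exist M < ∞ and ε₀ > 0 such that mod Γᵋ_{I,J} ≤ M for all 0 < ε < ε₀. -/

import Mathlib

open MeasureTheory Set

noncomputable section

/-- A continuous, piecewise continuously differentiable curve parametrized by `[0,1]`. -/
structure PCurve where
  toFun : ℝ → ℂ
  continuousOn : ContinuousOn toFun (Set.Icc 0 1)
  exceptional : Finset ℝ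
  differentiableAt : ∀ t ∈ Set.Icc (0:ℝ) 1 \ (exceptional : Set ℝ), DifferentiableAt ℝ toFun t
  derivContinuousOn : ContinuousOn (deriv toFun) (Set.Icc (0:ℝ) 1 \ (exceptional : Set ℝ))

/-- The line integral `∫_γ ρ |dz|` of a nonnegative Borel function along a curve. -/
def curveLIntegral (ρ : ℂ → ENNReal) (γ : PCurve) : ENNReal :=
  ∫⁻ t in Set.Ioo (0:ℝ) 1, ρ (γ.toFun t) * ENNReal.ofReal ‖deriv γ.toFun t‖

/-- `ρ` is admissible for the curve family `Γ`. -/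
def IsAdmissible (ρ : ℂ → ENNReal) (Γ : Set PCurve) : Prop :=
  Measurable ρ ∧ ∀ γ ∈ Γ, 1 ≤ curveLIntegral ρ γ

/-- The conformal modulus of a family of curves. -/
def modulus (Γ : Set PCurve) : ENNReal :=
  ⨅ (ρ : ℂ → ENNReal) (_ : IsAdmissible ρ Γ), ∫⁻ z : ℂ, ρ z ^ 2

/-- The family `(E, F; Ω)` of curves with interior in `Ω`, one endpoint in `E` and
the other endpoint in `F`. -/
def connecting (E F Ω : Set ℂ) : Set PCurve :=
  {γ | (∀ t ∈ Set.Ioo (0:ℝ) 1, γ.toFun t ∈ Ω) ∧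
    ((γ.toFun 0 ∈ E ∧ γ.toFun 1 ∈ F) ∨ (γ.toFun 0 ∈ F ∧ γ.toFun 1 ∈ E))}

/-- A continuum: a compact connected set with more than one point. -/
def IsContinuum (E : Set ℂ) : Prop :=
  IsCompact E ∧ IsConnected E ∧ E.Nontrivial

/-- The distance between two sets. -/
def setDist (E F : Set ℂ) : ℝ :=
  sInf (Set.image2 dist E F)

/-- The relative distance `Δ(E,F) = dist(E,F) / min(diam E, diam F)`. -/
def relDist (E F : Set ℂ) : ℝ :=
  setDist E F / min (Metric.diam E) (Metric.diam F)

/-- The horizontal strip `S = {z : 0 < Im z < 1}`. -/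
def stripS : Set ℂ := {z | 0 < z.im ∧ z.im < 1}

/-- The boundary `∂S = ℝ ∪ (ℝ + i)` of the strip. -/
def stripBdry : Set ℂ := {z | z.im = 0 ∨ z.im = 1}

/-- The horizontal shrinking map `H_ε(x + iy) = εx + iy`. -/
def Heps (ε : ℝ) (z : ℂ) : ℂ := ⟨ε * z.re, z.im⟩

/-- The left-end piece `{x ∈ ℝ : x < a} ∪ {x + i : x < b}` of `∂S`. -/
def leftEnd (a b : ℝ) : Set ℂ :=
  {z : ℂ | z.im = 0 ∧ z.re < a} ∪ {z : ℂ | z.im = 1 ∧ z.re < b}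

/-- The right-end piece `{x ∈ ℝ : a < x} ∪ {x + i : b < x}` of `∂S`. -/
def rightEnd (a b : ℝ) : Set ℂ :=
  {z : ℂ | z.im = 0 ∧ a < z.re} ∪ {z : ℂ | z.im = 1 ∧ b < z.re}

/-- `Γᵋ_{I,J} = (H_ε(I), H_ε(J); S)`. -/
def stripFam (ε : ℝ) (I J : Set ℂ) : Set PCurve :=
  connecting (Heps ε '' I) (Heps ε '' J) stripS

/-- FTC-type length bound on an interval with no exceptional points. -/
lemma norm_sub_le_lintegral_aux (f : ℝ → ℂ) (s s' : ℝ) (hss' : s ≤ s')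
    (hcont : ContinuousOn f (Icc s s'))
    (hder : ∀ x ∈ Ioo s s', DifferentiableAt ℝ f x) :
    ENNReal.ofReal ‖f s' - f s‖ ≤ ∫⁻ t in Ioo s s', ENNReal.ofReal ‖deriv f t‖ := by
  by_cases htop : (∫⁻ t in Ioo s s', ENNReal.ofReal ‖deriv f t‖) = ⊤
  · rw [htop]; exact le_top
  · have hint : IntegrableOn (deriv f) (Ioo s s') := by
      refine ⟨(stronglyMeasurable_deriv f).aestronglyMeasurable, ?_⟩
      rw [hasFiniteIntegral_iff_norm]
      exact lt_top_iff_ne_top.2 (by simpa using htop)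
    have hicc : IntegrableOn (deriv f) (Icc s s') := by
      rw [integrableOn_Icc_iff_integrableOn_Ioo]; exact hint
    have hII : IntervalIntegrable (deriv f) volume s s' :=
      (intervalIntegrable_iff_integrableOn_Icc_of_le hss').2 hicc
    have hftc : ∫ y in s..s', deriv f y = f s' - f s :=
      intervalIntegral.integral_eq_sub_of_hasDeriv_right_of_le hss' hcont
        (fun x hx => ((hder x hx).hasDerivAt.hasDerivWithinAt)) hII
    have h1 : ‖f s' - f s‖ ≤ ∫ t in Ioo s s', ‖deriv f t‖ := by
      rw [← hftc]
      refine (intervalIntegral.norm_integral_le_integral_norm hss').trans_eq ?_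
      rw [intervalIntegral.integral_of_le hss', integral_Ioc_eq_integral_Ioo]
    calc ENNReal.ofReal ‖f s' - f s‖
        ≤ ENNReal.ofReal (∫ t in Ioo s s', ‖deriv f t‖) := ENNReal.ofReal_le_ofReal h1
      _ = ∫⁻ t in Ioo s s', ENNReal.ofReal ‖deriv f t‖ :=
          ofReal_integral_eq_lintegral_ofReal hint.norm (ae_of_all _ fun t => norm_nonneg _)

/-- FTC-type length bound, allowing finitely many exceptional points. -/
lemma norm_sub_le_lintegral (f : ℝ → ℂ) (F : Finset ℝ)
    (hcont : ContinuousOn f (Icc 0 1))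
    (hder : ∀ t ∈ Icc (0:ℝ) 1 \ (F : Set ℝ), DifferentiableAt ℝ f t) :
    ∀ (n : ℕ) (s s' : ℝ), (F.filter (fun x => x ∈ Ioo s s')).card ≤ n →
      0 ≤ s → s ≤ s' → s' ≤ 1 →
      ENNReal.ofReal ‖f s' - f s‖ ≤ ∫⁻ t in Ioo s s', ENNReal.ofReal ‖deriv f t‖ := by
  intro n
  induction n with
  | zero =>
    intro s s' hcard h0 hss h1
    have hF : ∀ x ∈ Ioo s s', x ∉ F := by
      intro x hx hxF
      have h := Finset.card_eq_zero.mp (Nat.le_zero.mp hcard)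
      have : x ∈ F.filter (fun x => x ∈ Ioo s s') := Finset.mem_filter.mpr ⟨hxF, hx⟩
      rw [h] at this
      exact absurd this (Finset.notMem_empty x)
    exact norm_sub_le_lintegral_aux f s s' hss (hcont.mono (Icc_subset_Icc h0 h1))
      (fun x hx => hder x ⟨⟨h0.trans hx.1.le, hx.2.le.trans h1⟩, hF x hx⟩)
  | succ n ih =>
    intro s s' hcard h0 hss h1
    by_cases hc : (F.filter (fun x => x ∈ Ioo s s')).card ≤ n
    · exact ih s s' hc h0 hss h1
    · have hne : (F.filter (fun x => x ∈ Ioo s s')).Nonempty := Finset.card_pos.mp (by omega)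
      obtain ⟨x, hx⟩ := hne
      have hxF : x ∈ F := (Finset.mem_filter.mp hx).1
      have hxI : x ∈ Ioo s s' := (Finset.mem_filter.mp hx).2
      have hsub1 : F.filter (fun y => y ∈ Ioo s x) ⊆ (F.filter (fun y => y ∈ Ioo s s')).erase x := by
        intro y hy
        obtain ⟨hyF, hyI⟩ := Finset.mem_filter.mp hy
        exact Finset.mem_erase.mpr ⟨ne_of_lt hyI.2, Finset.mem_filter.mpr
          ⟨hyF, hyI.1, hyI.2.trans hxI.2⟩⟩
      have hsub2 : F.filter (fun y => y ∈ Ioo x s') ⊆ (F.filter (fun y => y ∈ Ioo s s')).erase x := by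
        intro y hy
        obtain ⟨hyF, hyI⟩ := Finset.mem_filter.mp hy
        exact Finset.mem_erase.mpr ⟨ne_of_gt hyI.1, Finset.mem_filter.mpr
          ⟨hyF, hxI.1.trans hyI.1, hyI.2⟩⟩
      have hcardsub : ((F.filter (fun y => y ∈ Ioo s s')).erase x).card ≤ n := by
        have := Finset.card_erase_of_mem hx
        omega
      have A := ih s x (le_trans (Finset.card_le_card hsub1) hcardsub)
        h0 hxI.1.le (hxI.2.le.trans h1)
      have B := ih x s' (le_trans (Finset.card_le_card hsub2) hcardsub)
        (h0.trans hxI.1.le) hxI.2.le h1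
      have hdisj : Disjoint (Ioo s x) (Ioo x s') :=
        Set.disjoint_left.mpr fun y hy hy' => absurd hy'.1 (not_lt.2 hy.2.le)
      calc ENNReal.ofReal ‖f s' - f s‖
          ≤ ENNReal.ofReal (‖f x - f s‖ + ‖f s' - f x‖) := by
            refine ENNReal.ofReal_le_ofReal ?_
            calc ‖f s' - f s‖ = dist (f s') (f s) := (dist_eq_norm _ _).symm
              _ ≤ dist (f s') (f x) + dist (f x) (f s) := dist_triangle _ _ _
              _ = ‖f x - f s‖ + ‖f s' - f x‖ := by
                  rw [dist_eq_norm, dist_eq_norm, add_comm]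
        _ ≤ ENNReal.ofReal ‖f x - f s‖ + ENNReal.ofReal ‖f s' - f x‖ := ENNReal.ofReal_add_le
        _ ≤ (∫⁻ t in Ioo s x, ENNReal.ofReal ‖deriv f t‖)
            + ∫⁻ t in Ioo x s', ENNReal.ofReal ‖deriv f t‖ := add_le_add A B
        _ = ∫⁻ t in Ioo s x ∪ Ioo x s', ENNReal.ofReal ‖deriv f t‖ :=
            (lintegral_union measurableSet_Ioo hdisj).symm
        _ ≤ ∫⁻ t in Ioo s s', ENNReal.ofReal ‖deriv f t‖ := by
            refine lintegral_mono_set (union_subset ?_ ?_)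
            · exact Ioo_subset_Ioo le_rfl hxI.2.le
            · exact Ioo_subset_Ioo hxI.1.le le_rfl

/-- The length of a `PCurve` over `[s, s'] ⊆ [0,1]` is at least the distance
between its endpoints. -/
lemma pcurve_norm_sub_le (γ : PCurve) {s s' : ℝ} (h0 : 0 ≤ s) (hss : s ≤ s') (h1 : s' ≤ 1) :
    ENNReal.ofReal ‖γ.toFun s' - γ.toFun s‖ ≤
      ∫⁻ t in Ioo s s', ENNReal.ofReal ‖deriv γ.toFun t‖ :=
  norm_sub_le_lintegral γ.toFun γ.exceptional γ.continuousOn γ.differentiableAt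
    _ s s' le_rfl h0 hss h1

set_option maxHeartbeats 1000000 in
/-- If `I = (a,b)` is a bounded interval on the lower boundary line and
`J = {x : x > c} ∪ {x + i : x > d}` with `b < c`, then `mod Γᵋ_{I,J}` is bounded
as `ε → 0⁺`. -/
theorem strip_modulus_bounded_interval_rightEnd (a b c d : ℝ) (hab : a < b) (hbc : b < c) :
    ∃ M : ℝ, ∃ ε₀ : ℝ, 0 < ε₀ ∧ ∀ ε : ℝ, 0 < ε → ε < ε₀ →
      modulus (stripFam ε {z : ℂ | z.im = 0 ∧ a < z.re ∧ z.re < b} (rightEnd c d)) ≤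
        ENNReal.ofReal M := by
  have hδ : 0 < c - b := sub_pos.2 hbc
  set δ : ℝ := c - b with hδdef
  refine ⟨2 * (c - a + δ) / δ, (1 + δ)⁻¹, by positivity, ?_⟩
  intro ε hε hεlt
  set r : ℝ := ε * δ with hrdef
  have hrpos : 0 < r := mul_pos hε hδ
  have hr1 : r < 1 := by
    have h1 : ε * (1 + δ) < (1 + δ)⁻¹ * (1 + δ) :=
      mul_lt_mul_of_pos_right hεlt (by positivity)
    rw [inv_mul_cancel₀ (by positivity : (1 + δ) ≠ 0)] at h1
    nlinarith [hε.le, hδ]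
  set Q : Set ℂ := {z : ℂ | ε * (a - δ) ≤ z.re ∧ z.re ≤ ε * c ∧ -r ≤ z.im ∧ z.im ≤ r} with hQdef
  set O : Set ℂ := {z : ℂ | ε * (a - δ) < z.re ∧ z.re < ε * c ∧ -r < z.im ∧ z.im < r} with hOdef
  have hQeq : Q = Complex.measurableEquivRealProd ⁻¹'
      (Icc (ε * (a - δ)) (ε * c) ×ˢ Icc (-r) r) := by
    ext z
    simp only [hQdef, mem_setOf_eq, mem_preimage, mem_prod, mem_Icc]
    constructor
    · rintro ⟨h1, h2, h3, h4⟩; exact ⟨⟨h1, h2⟩, h3, h4⟩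
    · rintro ⟨⟨h1, h2⟩, h3, h4⟩; exact ⟨h1, h2, h3, h4⟩
  have hQmeas : MeasurableSet Q := by
    rw [hQeq]
    exact (measurableSet_Icc.prod measurableSet_Icc).preimage
      Complex.measurableEquivRealProd.measurable
  have hOopen : IsOpen O := by
    have : O = Complex.re ⁻¹' (Ioo (ε * (a - δ)) (ε * c)) ∩
        Complex.im ⁻¹' (Ioo (-r) r) := by
      ext z
      simp only [hOdef, mem_setOf_eq, mem_inter_iff, mem_preimage, mem_Ioo]
      tauto
    rw [this]
    exact ((isOpen_Ioo).preimage Complex.continuous_re).inter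
      ((isOpen_Ioo).preimage Complex.continuous_im)
  have hOQ : O ⊆ Q := fun z hz => ⟨hz.1.le, hz.2.1.le, hz.2.2.1.le, hz.2.2.2.le⟩
  set ρ : ℂ → ENNReal := Q.indicator (fun _ => ENNReal.ofReal r⁻¹) with hρdef
  set Iset : Set ℂ := {z : ℂ | z.im = 0 ∧ a < z.re ∧ z.re < b} with hIdef
  -- facts about the endpoint sets
  have hIO : ∀ w ∈ Heps ε '' Iset, w ∈ O := by
    rintro w ⟨z, hz, rfl⟩
    obtain ⟨hzim, hza, hzb⟩ := hz
    have h1 : ε * (a - δ) < ε * z.re := by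
      apply mul_lt_mul_of_pos_left _ hε; linarith
    have h2 : ε * z.re < ε * c := by
      apply mul_lt_mul_of_pos_left _ hε; linarith
    exact ⟨by simpa [Heps] using h1, by simpa [Heps] using h2,
      by simp [Heps, hzim]; linarith, by simp [Heps, hzim]; linarith⟩
  have hJnotQ : ∀ w ∈ Heps ε '' rightEnd c d, w ∉ Q := by
    rintro w ⟨z, hz, rfl⟩ hwQ
    obtain ⟨h1, h2, h3, h4⟩ := hwQ
    rcases hz with ⟨hzim, hzre⟩ | ⟨hzim, hzre⟩
    · have : ε * c < ε * z.re := mul_lt_mul_of_pos_left hzre hε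
      simp only [Heps] at h2
      linarith
    · simp only [Heps] at h4
      rw [hzim] at h4
      linarith
  have hJim : ∀ w ∈ Heps ε '' rightEnd c d, 0 ≤ w.im ∧ w.im ≤ 1 := by
    rintro w ⟨z, hz, rfl⟩
    rcases hz with ⟨hzim, _⟩ | ⟨hzim, _⟩ <;> simp [Heps, hzim]
  have hIim : ∀ w ∈ Heps ε '' Iset, w.im = 0 := by
    rintro w ⟨z, hz, rfl⟩
    simp [Heps, hz.1]
  -- the distance estimate
  have hdist : ∀ w' : ℂ, w' ∉ O → 0 ≤ w'.im → ∀ w ∈ Heps ε '' Iset, r ≤ ‖w' - w‖ := by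
    rintro w' hO' him' w ⟨z, hz, rfl⟩
    obtain ⟨hzim, hza, hzb⟩ := hz
    have hwre : (Heps ε z).re = ε * z.re := rfl
    have hwim : (Heps ε z).im = 0 := hzim
    have habs_re : |(w' - Heps ε z).re| ≤ ‖w' - Heps ε z‖ := by
      exact Complex.abs_re_le_norm _
    have habs_im : |(w' - Heps ε z).im| ≤ ‖w' - Heps ε z‖ := by
      exact Complex.abs_im_le_norm _
    rcases le_or_gt w'.re (ε * (a - δ)) with h1 | h1
    · -- exit to the left
      have hza' : ε * a < ε * z.re := mul_lt_mul_of_pos_left hza hε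
      have : r ≤ -(w' - Heps ε z).re := by
        simp only [Complex.sub_re, hwre, hrdef]
        nlinarith
      linarith [neg_le_abs ((w' - Heps ε z).re)]
    rcases le_or_gt (ε * c) w'.re with h2 | h2
    · -- exit to the right
      have hzb' : ε * z.re < ε * b := mul_lt_mul_of_pos_left hzb hε
      have : r ≤ (w' - Heps ε z).re := by
        simp only [Complex.sub_re, hwre, hrdef]
        nlinarith
      linarith [le_abs_self ((w' - Heps ε z).re)]
    rcases le_or_gt r w'.im with h4 | h4
    · -- exit upwards
      have : r ≤ (w' - Heps ε z).im := by
        simp only [Complex.sub_im, hwim]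
        linarith
      linarith [le_abs_self ((w' - Heps ε z).im)]
    · exact absurd ⟨h1, h2, by linarith, h4⟩ hO'
  -- admissibility
  have hadm : IsAdmissible ρ
      (stripFam ε Iset (rightEnd c d)) := by
    refine ⟨Measurable.indicator measurable_const hQmeas, ?_⟩
    intro γ hγ
    obtain ⟨hintS, hend⟩ := hγ
    have hXmeas : Measurable fun t => ENNReal.ofReal ‖deriv γ.toFun t‖ :=
      (measurable_deriv _).norm.ennreal_ofReal
    have him : ∀ t ∈ Icc (0:ℝ) 1, 0 ≤ (γ.toFun t).im := by
      intro t ht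
      rcases eq_or_lt_of_le ht.1 with h0 | h0
      · rcases hend with ⟨hI0, _⟩ | ⟨hJ0, _⟩
        · rw [← h0, hIim _ hI0]
        · rw [← h0]; exact (hJim _ hJ0).1
      rcases eq_or_lt_of_le ht.2 with h1 | h1
      · rcases hend with ⟨_, hJ1⟩ | ⟨_, hI1⟩
        · rw [h1]; exact (hJim _ hJ1).1
        · rw [h1, hIim _ hI1]
      · exact (hintS t ⟨h0, h1⟩).1.le
    rcases hend with ⟨hI0, hJ1⟩ | ⟨hJ0, hI1⟩
    · -- the curve starts on `Hε(I)`
      set T : Set ℝ := {t | t ∈ Icc (0:ℝ) 1 ∧ γ.toFun t ∉ Q} with hTdef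
      have hTsub : T ⊆ Icc 0 1 := fun t ht => ht.1
      have hTne : T.Nonempty := ⟨1, ⟨zero_le_one, le_rfl⟩, hJnotQ _ hJ1⟩
      have hTbdd : BddBelow T := ⟨0, fun t ht => ht.1.1⟩
      set s : ℝ := sInf T with hsdef
      have h0s : 0 ≤ s := le_csInf hTne fun t ht => ht.1.1
      have hs1 : s ≤ 1 := csInf_le hTbdd ⟨⟨zero_le_one, le_rfl⟩, hJnotQ _ hJ1⟩
      have hin : ∀ t, 0 ≤ t → t < s → γ.toFun t ∈ Q := by
        intro t ht hts
        by_contra h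
        exact absurd (csInf_le hTbdd ⟨⟨ht, hts.le.trans hs1⟩, h⟩) (not_le.2 hts)
      have hsO : γ.toFun s ∉ O := by
        have hscl : s ∈ closure T := csInf_mem_closure hTne hTbdd
        have hcw : ContinuousWithinAt γ.toFun T s :=
          (γ.continuousOn s ⟨h0s, hs1⟩).mono hTsub
        have h1 : γ.toFun s ∈ closure (γ.toFun '' T) := hcw.mem_closure_image hscl
        have h2 : γ.toFun '' T ⊆ Qᶜ := by
          rintro w ⟨t, ht, rfl⟩; exact ht.2
        have h3 : γ.toFun s ∈ closure Oᶜ :=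
          closure_mono (h2.trans (compl_subset_compl.mpr hOQ)) h1
        rw [closure_compl, hOopen.interior_eq] at h3
        exact h3
      have hlen : ENNReal.ofReal r ≤ ∫⁻ t in Ioo 0 s, ENNReal.ofReal ‖deriv γ.toFun t‖ := by
        refine le_trans ?_ (pcurve_norm_sub_le γ le_rfl h0s hs1)
        exact ENNReal.ofReal_le_ofReal (hdist _ hsO (him s ⟨h0s, hs1⟩) _ hI0)
      calc (1:ENNReal) = ENNReal.ofReal r⁻¹ * ENNReal.ofReal r := by
            rw [← ENNReal.ofReal_mul (by positivity), inv_mul_cancel₀ hrpos.ne',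
              ENNReal.ofReal_one]
        _ ≤ ENNReal.ofReal r⁻¹ * ∫⁻ t in Ioo 0 s, ENNReal.ofReal ‖deriv γ.toFun t‖ :=
            mul_le_mul_right hlen _
        _ = ∫⁻ t in Ioo 0 s, ENNReal.ofReal r⁻¹ * ENNReal.ofReal ‖deriv γ.toFun t‖ :=
            (lintegral_const_mul _ hXmeas).symm
        _ = ∫⁻ t in Ioo 0 s, ρ (γ.toFun t) * ENNReal.ofReal ‖deriv γ.toFun t‖ := by
            refine setLIntegral_congr_fun measurableSet_Ioo (fun t ht => ?_)
            rw [hρdef, Set.indicator_of_mem (hin t ht.1.le ht.2)]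
        _ ≤ ∫⁻ t in Ioo 0 1, ρ (γ.toFun t) * ENNReal.ofReal ‖deriv γ.toFun t‖ :=
            lintegral_mono_set (Ioo_subset_Ioo le_rfl hs1)
        _ = curveLIntegral ρ γ := rfl
    · -- the curve ends on `Hε(I)`
      set T : Set ℝ := {t | t ∈ Icc (0:ℝ) 1 ∧ γ.toFun t ∉ Q} with hTdef
      have hTsub : T ⊆ Icc 0 1 := fun t ht => ht.1
      have hTne : T.Nonempty := ⟨0, ⟨le_rfl, zero_le_one⟩, hJnotQ _ hJ0⟩
      have hTbdd : BddAbove T := ⟨1, fun t ht => ht.1.2⟩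
      set s : ℝ := sSup T with hsdef
      have h0s : 0 ≤ s := le_csSup hTbdd ⟨⟨le_rfl, zero_le_one⟩, hJnotQ _ hJ0⟩
      have hs1 : s ≤ 1 := csSup_le hTne fun t ht => ht.1.2
      have hin : ∀ t, s < t → t ≤ 1 → γ.toFun t ∈ Q := by
        intro t hst ht
        by_contra h
        exact absurd (le_csSup hTbdd ⟨⟨h0s.trans hst.le, ht⟩, h⟩) (not_le.2 hst)
      have hsO : γ.toFun s ∉ O := by
        have hscl : s ∈ closure T := csSup_mem_closure hTne hTbdd
        have hcw : ContinuousWithinAt γ.toFun T s :=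
          (γ.continuousOn s ⟨h0s, hs1⟩).mono hTsub
        have h1 : γ.toFun s ∈ closure (γ.toFun '' T) := hcw.mem_closure_image hscl
        have h2 : γ.toFun '' T ⊆ Qᶜ := by
          rintro w ⟨t, ht, rfl⟩; exact ht.2
        have h3 : γ.toFun s ∈ closure Oᶜ :=
          closure_mono (h2.trans (compl_subset_compl.mpr hOQ)) h1
        rw [closure_compl, hOopen.interior_eq] at h3
        exact h3
      have hlen : ENNReal.ofReal r ≤ ∫⁻ t in Ioo s 1, ENNReal.ofReal ‖deriv γ.toFun t‖ := by
        refine le_trans ?_ (pcurve_norm_sub_le γ h0s hs1 le_rfl)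
        rw [norm_sub_rev]
        exact ENNReal.ofReal_le_ofReal (hdist _ hsO (him s ⟨h0s, hs1⟩) _ hI1)
      calc (1:ENNReal) = ENNReal.ofReal r⁻¹ * ENNReal.ofReal r := by
            rw [← ENNReal.ofReal_mul (by positivity), inv_mul_cancel₀ hrpos.ne',
              ENNReal.ofReal_one]
        _ ≤ ENNReal.ofReal r⁻¹ * ∫⁻ t in Ioo s 1, ENNReal.ofReal ‖deriv γ.toFun t‖ :=
            mul_le_mul_right hlen _
        _ = ∫⁻ t in Ioo s 1, ENNReal.ofReal r⁻¹ * ENNReal.ofReal ‖deriv γ.toFun t‖ :=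
            (lintegral_const_mul _ hXmeas).symm
        _ = ∫⁻ t in Ioo s 1, ρ (γ.toFun t) * ENNReal.ofReal ‖deriv γ.toFun t‖ := by
            refine setLIntegral_congr_fun measurableSet_Ioo (fun t ht => ?_)
            rw [hρdef, Set.indicator_of_mem (hin t ht.1 ht.2.le)]
        _ ≤ ∫⁻ t in Ioo 0 1, ρ (γ.toFun t) * ENNReal.ofReal ‖deriv γ.toFun t‖ :=
            lintegral_mono_set (Ioo_subset_Ioo h0s le_rfl)
        _ = curveLIntegral ρ γ := rfl
  -- the energy bound
  have henergy : (∫⁻ z : ℂ, ρ z ^ 2) ≤ ENNReal.ofReal (2 * (c - a + δ) / δ) := by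
    have hpt : ∀ z : ℂ, ρ z ^ 2 = Q.indicator (fun _ => ENNReal.ofReal r⁻¹ ^ 2) z := by
      intro z
      by_cases h : z ∈ Q <;> simp [hρdef, h]
    have hvol : volume Q = ENNReal.ofReal (ε * c - ε * (a - δ)) * ENNReal.ofReal (r - -r) := by
      rw [hQeq, Complex.volume_preserving_equiv_real_prod.measure_preimage
        ((measurableSet_Icc.prod measurableSet_Icc).nullMeasurableSet)]
      rw [Measure.volume_eq_prod, Measure.prod_prod, Real.volume_Icc, Real.volume_Icc]
    calc (∫⁻ z : ℂ, ρ z ^ 2)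
        = ∫⁻ z : ℂ, Q.indicator (fun _ => ENNReal.ofReal r⁻¹ ^ 2) z := by
          exact lintegral_congr hpt
      _ = ENNReal.ofReal r⁻¹ ^ 2 * volume Q := by
          rw [lintegral_indicator hQmeas, setLIntegral_const]
      _ = ENNReal.ofReal (r⁻¹ ^ 2 * ((ε * c - ε * (a - δ)) * (r - -r))) := by
          have h2 : (0:ℝ) ≤ ε * c - ε * (a - δ) := by nlinarith [hε.le]
          rw [hvol, ← ENNReal.ofReal_pow (by positivity : (0:ℝ) ≤ r⁻¹),
            ← ENNReal.ofReal_mul h2, ← ENNReal.ofReal_mul (by positivity : (0:ℝ) ≤ r⁻¹ ^ 2)]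
      _ ≤ ENNReal.ofReal (2 * (c - a + δ) / δ) := by
          refine ENNReal.ofReal_le_ofReal (le_of_eq ?_)
          rw [hrdef]
          field_simp
          ring
  calc modulus (stripFam ε Iset (rightEnd c d))
      ≤ ∫⁻ z : ℂ, ρ z ^ 2 := iInf₂_le ρ hadm
    _ ≤ ENNReal.ofReal (2 * (c - a + δ) / δ) := henergy

end
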